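/- Let p be an odd prime, A, B, C nonzero integers, and (x, y, z) rational numbers with x ≠ 0 satisfying A·x^p + B·y^p + C·z^p = 0. Define X = -B·C·y·z / x² and Y = (-B·C)^((p-1)/2) · (B·y^p - C·z^p) / (2·x^p). Then Y² = X^p + A²·(B·C)^(p-1)/4. -/

import Mathlib

theorem stmt_4 (p : ℕ) (hp : p.Prime) (hodd : Odd p) (A B C : ℤ) (hA : A ≠ 0)
    (hB : B ≠ 0) (hC : C ≠ 0) (x y z : ℚ) (hx : x ≠ 0)
    (h : (A : ℚ) * x ^ p + (B : ℚ) * y ^ p + (C : ℚ) * z ^ p = 0)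
    (X Y : ℚ) (hX : X = -(B : ℚ) * C * y * z / x ^ 2)
    (hY : Y = (-(B : ℚ) * C) ^ ((p - 1) / 2) * ((B : ℚ) * y ^ p - (C : ℚ) * z ^ p)
      / (2 * x ^ p)) :
    Y ^ 2 = X ^ p + (A : ℚ) ^ 2 * ((B : ℚ) * C) ^ (p - 1) / 4 := by
  obtain ⟨m, hm⟩ := hodd
  subst hm
  have hp2 : (2 * m + 1 - 1) / 2 = m := by omega
  have hp3 : 2 * m + 1 - 1 = 2 * m := by omega
  rw [hp2] at hY
  rw [hp3]
  have hxp : x ^ (2 * m + 1) ≠ 0 := pow_ne_zero _ hx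
  -- abbreviations
  set w : ℚ := ((B : ℚ) * C) ^ m with hwdef
  set P : ℚ := y ^ (2 * m + 1) with hP
  set Q : ℚ := z ^ (2 * m + 1) with hQ
  set R : ℚ := x ^ (2 * m + 1) with hR
  have hw : ((-(B : ℚ) * C) ^ m) ^ 2 = w ^ 2 := by
    rw [hwdef, ← pow_mul, ← pow_mul]
    rw [mul_comm m 2, pow_mul, pow_mul]
    congr 1
    ring
  have hXp : X ^ (2 * m + 1)
      = -(w ^ 2 * ((B : ℚ) * C) * (P * Q) / R ^ 2) := by
    rw [hX, div_pow]
    have h1 : (-(B : ℚ) * C * y * z) ^ (2 * m + 1)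
        = -(((B : ℚ) * C * y * z) ^ (2 * m + 1)) := by
      have e : (-(B : ℚ) * C * y * z) = -((B : ℚ) * C * y * z) := by ring
      rw [e, Odd.neg_pow ⟨m, by ring⟩]
    rw [h1]
    have h2 : ((B : ℚ) * C * y * z) ^ (2 * m + 1)
        = w ^ 2 * ((B : ℚ) * C) * (P * Q) := by
      rw [hwdef, hP, hQ, mul_pow, mul_pow, ← pow_mul]
      rw [show m * 2 = 2 * m from mul_comm m 2, pow_succ, pow_mul]
      ring
    have h3 : (x ^ 2) ^ (2 * m + 1) = R ^ 2 := by
      rw [hR, ← pow_mul, ← pow_mul]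
      ring_nf
    rw [h2, h3]
    ring
  have hbc : ((B : ℚ) * C) ^ (2 * m) = w ^ 2 := by
    rw [hwdef, ← pow_mul, mul_comm m 2]
  rw [hY, hXp, hbc, div_pow, mul_pow, hw]
  clear hwdef hP hQ hR hX hY hXp hbc hw hp hp2 hp3
  clear_value w P Q R
  field_simp
  linear_combination (4 * w ^ 2 * ((B : ℚ) * P + (C : ℚ) * Q - A * R)) * h
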